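/- Proximal operator composition: for any gauge function σ_C on ℝ^n and constants λ, λ₂ > 0, the proximal operator of ψ(x) = λσ_C(x) + λ₂‖x‖₂ is the composition prox_ψ(y) = prox_{λ₂‖·‖₂}(prox_{λσ_C}(y)). -/

import Mathlib

open scoped BigOperators

open RealInnerProductSpace

/-- Subgradient inequality at a prox minimizer: if `p` minimizes
`x ↦ (1/2)‖z - x‖² + g x` for a convex `g`, then `⟪z - p, x - p⟫ ≤ g x - g p`. -/
lemma subgrad_of_prox {E : Type*} [NormedAddCommGroup E] [InnerProductSpace ℝ E]
    (g : E → ℝ) (hg : ConvexOn ℝ Set.univ g) (z p : E)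
    (hp : ∀ x, (1 / 2) * ‖z - p‖ ^ 2 + g p ≤ (1 / 2) * ‖z - x‖ ^ 2 + g x)
    (x : E) : ⟪z - p, x - p⟫ ≤ g x - g p := by
  have h : ∀ ε > (0:ℝ), ⟪z - p, x - p⟫ ≤ (g x - g p) + ε := by
    intro ε hε
    set θ : ℝ := min 1 (2 * ε / (‖x - p‖ ^ 2 + 1)) with hθdef
    have hθ0 : 0 < θ := lt_min one_pos (by positivity)
    have hθ1 : θ ≤ 1 := min_le_left _ _
    have key := hp (p + θ • (x - p))
    have hsub : z - (p + θ • (x - p)) = (z - p) - θ • (x - p) := by abel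
    have hns : ‖(z - p) - θ • (x - p)‖ ^ 2
        = ‖z - p‖ ^ 2 - 2 * (θ * ⟪z - p, x - p⟫) + θ ^ 2 * ‖x - p‖ ^ 2 := by
      rw [norm_sub_sq_real, real_inner_smul_right, norm_smul, Real.norm_eq_abs,
        abs_of_pos hθ0]
      ring
    have hcomb : p + θ • (x - p) = (1 - θ) • p + θ • x := by
      rw [smul_sub, sub_smul, one_smul]; abel
    have hconv := hg.2 (Set.mem_univ p) (Set.mem_univ x)
      (by linarith : (0:ℝ) ≤ 1 - θ) hθ0.le (by ring)
    rw [hsub, hns] at key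
    rw [hcomb] at key
    simp only [smul_eq_mul] at hconv
    have key2 : θ * ⟪z - p, x - p⟫
        ≤ θ ^ 2 / 2 * ‖x - p‖ ^ 2 + θ * (g x - g p) := by
      have := hconv
      nlinarith [this, key]
    have hθ2 : θ * ‖x - p‖ ^ 2 ≤ 2 * ε := by
      have h1 : θ ≤ 2 * ε / (‖x - p‖ ^ 2 + 1) := min_le_right _ _
      have h2 : θ * ‖x - p‖ ^ 2 ≤ (2 * ε / (‖x - p‖ ^ 2 + 1)) * ‖x - p‖ ^ 2 :=
        mul_le_mul_of_nonneg_right h1 (by positivity)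
      have h3 : (2 * ε / (‖x - p‖ ^ 2 + 1)) * ‖x - p‖ ^ 2 ≤ 2 * ε := by
        rw [div_mul_eq_mul_div, div_le_iff₀ (by positivity)]
        nlinarith [sq_nonneg ‖x - p‖]
      linarith
    have hdiv : ⟪z - p, x - p⟫ ≤ θ / 2 * ‖x - p‖ ^ 2 + (g x - g p) := by
      have := key2
      rw [← mul_le_mul_iff_right₀ hθ0]
      nlinarith [this]
    nlinarith [hdiv, hθ2, hθ0]
  exact le_of_forall_pos_le_add h

/-- Proximal operator composition: for a gauge function `σ` and `λ, λ₂ > 0`,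
`prox_{λσ + λ₂‖·‖₂}(y) = prox_{λ₂‖·‖₂}(prox_{λσ}(y))`. Here `p1 = prox_{λσ}(y)` and
`p2 = prox_{λ₂‖·‖₂}(p1)` are characterized as minimizers, and the conclusion states that
`p2` minimizes the objective defining `prox_{λσ(·) + λ₂‖·‖₂}(y)`. -/
theorem prox_gauge_l2_composition {n : ℕ}
    (σ : EuclideanSpace ℝ (Fin n) → ℝ)
    -- σ is a gauge function: vanishes at 0, nonnegative, positively homogeneous, convex
    (hσ0 : σ 0 = 0) (hσnn : ∀ x, 0 ≤ σ x)
    (hσhom : ∀ (c : ℝ), 0 ≤ c → ∀ x, σ (c • x) = c * σ x)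
    (hσconv : ConvexOn ℝ Set.univ σ)
    (lam lam2 : ℝ) (hlam : 0 < lam) (hlam2 : 0 < lam2)
    (y p1 p2 : EuclideanSpace ℝ (Fin n))
    (hp1 : ∀ x : EuclideanSpace ℝ (Fin n),
      (1 / 2) * ‖y - p1‖ ^ 2 + lam * σ p1 ≤ (1 / 2) * ‖y - x‖ ^ 2 + lam * σ x)
    (hp2 : ∀ x : EuclideanSpace ℝ (Fin n),
      (1 / 2) * ‖p1 - p2‖ ^ 2 + lam2 * ‖p2‖ ≤ (1 / 2) * ‖p1 - x‖ ^ 2 + lam2 * ‖x‖) :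
    ∀ x : EuclideanSpace ℝ (Fin n),
      (1 / 2) * ‖y - p2‖ ^ 2 + lam * σ p2 + lam2 * ‖p2‖
        ≤ (1 / 2) * ‖y - x‖ ^ 2 + lam * σ x + lam2 * ‖x‖ := by
  intro x
  -- subgradient inequalities at the two prox points
  have hσsc : ConvexOn ℝ Set.univ (fun v => lam * σ v) := hσconv.smul hlam.le
  have hnsc : ConvexOn ℝ Set.univ (fun v : EuclideanSpace ℝ (Fin n) => lam2 * ‖v‖) :=
    (convexOn_univ_norm).smul hlam2.le
  have KG : ∀ v : EuclideanSpace ℝ (Fin n),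
      ⟪y - p1, v - p1⟫ ≤ lam * σ v - lam * σ p1 :=
    fun v => subgrad_of_prox _ hσsc y p1 hp1 v
  have KG2 : ∀ v : EuclideanSpace ℝ (Fin n),
      ⟪p1 - p2, v - p2⟫ ≤ lam2 * ‖v‖ - lam2 * ‖p2‖ :=
    fun v => subgrad_of_prox _ hnsc p1 p2 hp2 v
  -- key1 : ⟪y - p1, p1⟫ ≤ lam * σ p1
  have key1 : ⟪y - p1, p1⟫ ≤ lam * σ p1 := by
    have h := KG ((2:ℝ) • p1)
    have h2 : (2:ℝ) • p1 - p1 = p1 := by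
      rw [two_smul]; abel
    rw [h2, hσhom 2 (by norm_num) p1] at h
    linarith
  -- the central inequality
  have hkey : ⟪y - p1, p1 - p2⟫ ≤ lam * σ p1 - lam * σ p2 := by
    by_cases hp20 : p2 = 0
    · subst hp20
      simpa [hσ0] using key1
    · have hp2pos : 0 < ‖p2‖ := norm_pos_iff.mpr hp20
      have e1 : lam2 * ‖p2‖ ≤ ⟪p1 - p2, p2⟫ := by
        have h := KG2 0
        rw [zero_sub, inner_neg_right, norm_zero] at h
        linarith
      have e2 : ‖p1 - p2‖ ^ 2 ≤ lam2 * ‖p1‖ - lam2 * ‖p2‖ := by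
        have h := KG2 p1
        rwa [real_inner_self_eq_norm_sq] at h
      have e3 : ‖p1‖ - ‖p2‖ ≤ ‖p1 - p2‖ := norm_sub_norm_le _ _
      have e4 : ‖p1 - p2‖ ≤ lam2 := by
        by_contra hcon
        push_neg at hcon
        nlinarith [norm_nonneg (p1 - p2)]
      have e5 : ⟪p1 - p2, p2⟫ ≤ ‖p1 - p2‖ * ‖p2‖ := real_inner_le_norm _ _
      have e6 : ‖p1 - p2‖ * ‖p2‖ ≤ lam2 * ‖p2‖ :=
        mul_le_mul_of_nonneg_right e4 (norm_nonneg _)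
      have e7 : ⟪p1 - p2, p2⟫ = ‖p1 - p2‖ * ‖p2‖ :=
        le_antisymm e5 (by linarith)
      have e9 : ‖p1 - p2‖ = lam2 := by
        have : lam2 * ‖p2‖ ≤ ‖p1 - p2‖ * ‖p2‖ := by linarith [e1, e7.symm.le]
        have hle : lam2 ≤ ‖p1 - p2‖ := le_of_mul_le_mul_right (by linarith) hp2pos
        linarith
      have e8 : ‖p2‖ • (p1 - p2) = ‖p1 - p2‖ • p2 :=
        (inner_eq_norm_mul_iff_real).mp e7
      rw [e9] at e8
      -- derive p2 = c • p1 with c = ‖p2‖/(‖p2‖ + lam2)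
      set s : ℝ := ‖p2‖ + lam2 with hs
      have hspos : 0 < s := by positivity
      have hmul : ‖p2‖ • p1 = s • p2 := by
        have : ‖p2‖ • p1 - ‖p2‖ • p2 = lam2 • p2 := by
          rw [← smul_sub]; exact e8
        have h2 : ‖p2‖ • p1 = ‖p2‖ • p2 + lam2 • p2 := by
          rw [← this]; abel
        rw [h2, hs, add_smul]
      set c : ℝ := ‖p2‖ / s with hc
      have hc0 : 0 ≤ c := by positivity
      have hc1 : c ≤ 1 := by
        rw [hc, div_le_one hspos]; linarith
      have hp2eq : p2 = c • p1 := by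
        have : s⁻¹ • (‖p2‖ • p1) = s⁻¹ • (s • p2) := by rw [hmul]
        rw [smul_smul, smul_smul, inv_mul_cancel₀ hspos.ne', one_smul] at this
        rw [hc, div_eq_inv_mul]
        exact this.symm
      have hσp2 : σ p2 = c * σ p1 := by rw [hp2eq, hσhom c hc0]
      have hdiff : p1 - p2 = (1 - c) • p1 := by
        rw [hp2eq, sub_smul, one_smul]
      rw [hdiff, real_inner_smul_right, hσp2]
      have : (1 - c) * ⟪y - p1, p1⟫ ≤ (1 - c) * (lam * σ p1) :=
        mul_le_mul_of_nonneg_left key1 (by linarith)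
      nlinarith [this]
  -- assemble everything
  have expand1 : ‖y - p2‖ ^ 2
      = ‖y - p1‖ ^ 2 + 2 * ⟪y - p1, p1 - p2⟫ + ‖p1 - p2‖ ^ 2 := by
    have h : y - p2 = (y - p1) + (p1 - p2) := by abel
    rw [h, norm_add_sq_real]
  have expand2 : ‖y - x‖ ^ 2
      = ‖y - p1‖ ^ 2 - 2 * ⟪y - p1, x - p1⟫ + ‖p1 - x‖ ^ 2 := by
    have h : y - x = (y - p1) - (x - p1) := by abel
    rw [h, norm_sub_sq_real, norm_sub_rev p1 x]
  have h2 := hp2 x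
  have hKGx := KG x
  linarith [expand1, expand2, h2, hKGx, hkey]
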